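/- For an MCP α ∈ {0,1}^n, the bitstring α is lexicographically greater than every β ∈ P_α; consequently, the leading monomial of g_α = y^α + ∑_{β∈P_α} y^β with respect to lex order (y_1 > ... > y_n) is y^α. -/

import Mathlib

open MvPolynomial Finset

variable {n : ℕ}

/-- Number of ones (east steps) in a bitstring. -/
def ones (γ : Fin n → Bool) : ℕ := (Finset.univ.filter fun i => γ i = true).card

/-- Number of ones among the first `m` entries. -/
def prefOnes (γ : Fin n → Bool) (m : ℕ) : ℕ :=
  (Finset.univ.filter fun i : Fin n => γ i = true ∧ (i : ℕ) < m).card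

/-- Number of zeros among the first `m` entries. -/
def prefZeros (γ : Fin n → Bool) (m : ℕ) : ℕ :=
  (Finset.univ.filter fun i : Fin n => γ i = false ∧ (i : ℕ) < m).card

/-- `α` is a Modified Catalan Path: `α = w·1·0^m` where `w` is a Catalan path of length
`2l` (each prefix of `w` has no more ones than zeros, and `w` has exactly `l` ones). -/
def IsMCP (α : Fin n → Bool) : Prop :=
  ∃ l : ℕ, 2 * l < n ∧
    (∀ m ≤ 2 * l, prefOnes α m ≤ prefZeros α m) ∧
    prefOnes α (2 * l) = l ∧
    (∀ i : Fin n, (i : ℕ) = 2 * l → α i = true) ∧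
    (∀ i : Fin n, 2 * l < (i : ℕ) → α i = false)

/-- The set `P_α` of paths weakly above `α`: bitstrings `β ≠ α` with the same number of
ones, such that `α_i = 0 ⟹ β_i = 0` for all positions `i ≤ d = 2ℓ₁(α) − 1`. -/
def PA (α : Fin n → Bool) : Finset (Fin n → Bool) :=
  Finset.univ.filter fun β => β ≠ α ∧ ones β = ones α ∧
    ∀ i : Fin n, (i : ℕ) < 2 * ones α - 1 → α i = false → β i = false

/-- The squarefree monomial `y^γ` attached to a bitstring `γ`. -/
noncomputable def bmono (F : Type*) [Field F] (γ : Fin n → Bool) :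
    MvPolynomial (Fin n) F :=
  ∏ i : Fin n, if γ i then X i else 1

/-- The Gröbner basis element `g_α = y^α + ∑_{β ∈ P_α} y^β`. -/
noncomputable def gpoly (F : Type*) [Field F] (α : Fin n → Bool) :
    MvPolynomial (Fin n) F :=
  bmono F α + ∑ β ∈ PA α, bmono F β

/-- The exponent vector of the squarefree monomial `y^γ`. -/
noncomputable def expVec (γ : Fin n → Bool) : Fin n →₀ ℕ :=
  ∑ i ∈ Finset.univ.filter (fun i => γ i = true), Finsupp.single i 1

/-- for an MCP `α`, every `β ∈ P_α` is lexicographically smaller than `α`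
(for the order with `y₁ > ⋯ > yₙ`, i.e. `Finsupp.Lex` on exponent vectors), and
consequently the leading monomial of `g_α` in lex order is `y^α`. -/

lemma expVec_apply (γ : Fin n → Bool) (i : Fin n) :
    expVec γ i = if γ i = true then 1 else 0 := by
  classical
  rw [expVec, Finsupp.finset_sum_apply]
  simp [Finsupp.single_apply, Finset.sum_ite_eq', Finset.mem_filter]

lemma expVec_inj {γ δ : Fin n → Bool} (h : expVec γ = expVec δ) : γ = δ := by
  funext i
  have h2 := DFunLike.congr_fun h i
  rw [expVec_apply, expVec_apply] at h2
  cases hg : γ i <;> cases hd : δ i <;> simp [hg, hd] at h2 ⊢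

lemma bmono_eq (F : Type*) [Field F] (γ : Fin n → Bool) :
    bmono F γ = monomial (expVec γ) (1 : F) := by
  rw [bmono, expVec, monomial_sum_one, Finset.prod_filter]
  rfl

lemma ones_of_mcp {α : Fin n → Bool} {l : ℕ} (hln : 2 * l < n)
    (h2l : prefOnes α (2 * l) = l)
    (hat : ∀ i : Fin n, (i : ℕ) = 2 * l → α i = true)
    (hafter : ∀ i : Fin n, 2 * l < (i : ℕ) → α i = false) :
    ones α = l + 1 := by
  classical
  set j : Fin n := ⟨2 * l, hln⟩ with hj
  have hset : (Finset.univ.filter fun i => α i = true)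
      = insert j (Finset.univ.filter fun i : Fin n => α i = true ∧ (i : ℕ) < 2 * l) := by
    ext i
    simp only [Finset.mem_filter, Finset.mem_insert, Finset.mem_univ, true_and]
    constructor
    · intro hi
      rcases lt_trichotomy (i : ℕ) (2 * l) with h | h | h
      · exact Or.inr ⟨hi, h⟩
      · exact Or.inl (Fin.ext h)
      · exact absurd (hafter i h) (by simp [hi])
    · rintro (rfl | ⟨hi, -⟩)
      · exact hat j rfl
      · exact hi
  have hjnot : j ∉ (Finset.univ.filter fun i : Fin n => α i = true ∧ (i : ℕ) < 2 * l) := by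
    simp [hj]
  rw [ones, hset, Finset.card_insert_of_notMem hjnot]
  rw [prefOnes] at h2l
  omega

lemma key {α : Fin n → Bool} (hα : IsMCP α) :
    ∀ β ∈ PA α, toLex (expVec β) < toLex (expVec α) := by
  classical
  obtain ⟨l, hln, -, h2l, hat, hafter⟩ := hα
  have honesα : ones α = l + 1 := ones_of_mcp hln h2l hat hafter
  intro β hβ
  rw [PA, Finset.mem_filter] at hβ
  obtain ⟨-, hne, hones, habove⟩ := hβ
  have hd : 2 * ones α - 1 = 2 * l + 1 := by omega
  set S : Finset (Fin n) := Finset.univ.filter (fun i => β i ≠ α i) with hS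
  have hSne : S.Nonempty := by
    by_contra h
    apply hne
    funext i
    by_contra hi
    exact h ⟨i, by simp [hS, hi]⟩
  set i₀ := S.min' hSne with hi₀
  have hi₀S : i₀ ∈ S := S.min'_mem hSne
  have hi₀ne : β i₀ ≠ α i₀ := by simpa [hS] using hi₀S
  have hmin : ∀ j : Fin n, j < i₀ → β j = α j := by
    intro j hj
    by_contra hjne
    exact absurd (S.min'_le j (by simp [hS, hjne])) (by omega)
  by_cases hcase : (i₀ : ℕ) < 2 * ones α - 1
  · have hαi : α i₀ = true := by
      cases h : α i₀
      · exact absurd (habove i₀ hcase h) (by simp [h] at hi₀ne ⊢; exact hi₀ne)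
      · rfl
    have hβi : β i₀ = false := by
      cases h : β i₀
      · rfl
      · exact absurd (h.trans hαi.symm) hi₀ne
    rw [Finsupp.Lex.lt_iff]
    refine ⟨i₀, fun j hj => ?_, ?_⟩
    · show expVec β j = expVec α j
      rw [expVec_apply, expVec_apply, hmin j hj]
    · show expVec β i₀ < expVec α i₀
      rw [expVec_apply, expVec_apply, hαi, hβi]
      simp
  · exfalso
    have hgt : 2 * l < (i₀ : ℕ) := by omega
    have hαi : α i₀ = false := hafter i₀ hgt
    have hβi : β i₀ = true := by
      cases h : β i₀
      · exact absurd (h.trans hαi.symm) hi₀ne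
      · rfl
    have hsub : insert i₀ (Finset.univ.filter fun i => α i = true)
        ⊆ Finset.univ.filter fun i => β i = true := by
      intro i hi
      rcases Finset.mem_insert.mp hi with rfl | hi
      · simp [hβi]
      · have hαtrue : α i = true := (Finset.mem_filter.mp hi).2
        have hile : (i : ℕ) ≤ 2 * l := by
          by_contra h
          exact absurd (hafter i (by omega)) (by simp [hαtrue])
        have : i < i₀ := by
          rw [Fin.lt_def]; omega
        simp [hmin i this, hαtrue]
    have hnot : i₀ ∉ (Finset.univ.filter fun i => α i = true) := by simp [hαi]
    have := Finset.card_le_card hsub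
    rw [Finset.card_insert_of_notMem hnot] at this
    rw [ones, ones] at hones
    omega

lemma coeff_gpoly (F : Type*) [Field F] (α : Fin n → Bool) (m : Fin n →₀ ℕ) :
    coeff m (gpoly F α)
      = (if expVec α = m then (1 : F) else 0)
        + ∑ β ∈ PA α, (if expVec β = m then (1 : F) else 0) := by
  classical
  rw [gpoly, coeff_add, bmono_eq, coeff_monomial, MvPolynomial.coeff_sum]
  congr 1
  exact Finset.sum_congr rfl fun β _ => by rw [bmono_eq, coeff_monomial]


theorem stmt18 (F : Type*) [Field F] [CharZero F] {n : ℕ} (α : Fin n → Bool)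
    (hα : IsMCP α) :
    (∀ β ∈ PA α, toLex (expVec β) < toLex (expVec α)) ∧
    expVec α ∈ (gpoly F α).support ∧
    ∀ d ∈ (gpoly F α).support, d ≠ expVec α → toLex d < toLex (expVec α) := by
  classical
  refine ⟨key hα, ?_, ?_⟩
  · rw [MvPolynomial.mem_support_iff, coeff_gpoly]
    have hz : ∑ β ∈ PA α, (if expVec β = expVec α then (1 : F) else 0) = 0 := by
      refine Finset.sum_eq_zero fun β hβ => ?_
      have hne : β ≠ α := ((Finset.mem_filter.mp hβ).2).1
      rw [if_neg (fun h => hne (expVec_inj h))]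
    rw [hz, if_pos rfl]
    norm_num
  · intro d hd hdne
    rw [MvPolynomial.mem_support_iff, coeff_gpoly, if_neg (fun h => hdne h.symm),
      zero_add] at hd
    obtain ⟨β, hβ, hβne⟩ := Finset.exists_ne_zero_of_sum_ne_zero hd
    have : expVec β = d := by
      by_contra h
      rw [if_neg h] at hβne
      exact hβne rfl
    rw [← this]
    exact key hα β hβ
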